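/- Under the single-step uniform label noise model with noise rate ε ∈ (0,1), for every α ∈ (0,1) and every fixed τ ∈ ℝ, the robust pinball loss is an unbiased estimate of the clean pinball loss: E[l(τ, S)] = E[ (1/(1−ε))·l(τ, S̃) − (ε/(K(1−ε)))·Σ_{y=1}^K l(τ, S_y) ]. -/

import Mathlib

open MeasureTheory ProbabilityTheory

/-- The pinball loss at level `1 - α`. -/
noncomputable def pinball (α τ s : ℝ) : ℝ :=
  α * (τ - s) * (if s ≤ τ then (1:ℝ) else 0) + (1 - α) * (s - τ) * (if τ < s then (1:ℝ) else 0)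


/-- the robust pinball loss is an unbiased estimate of the clean pinball loss
under the single-step uniform label noise model. -/
theorem robust_pinball_loss_unbiased
    {Ω 𝒳 : Type*} [MeasurableSpace Ω] [MeasurableSpace 𝒳]
    (μ : Measure Ω) [IsProbabilityMeasure μ]
    (K : ℕ) (hK : 1 ≤ K) (ε : ℝ) (hε : ε ∈ Set.Ioo (0:ℝ) 1)
    (X : Ω → 𝒳) (Y : Ω → Fin K) (U : Ω → ℝ) (Ybar : Ω → Fin K)
    (hX : Measurable X) (hY : Measurable Y) (hU : Measurable U) (hYbar : Measurable Ybar)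
    -- U is uniformly distributed on [0,1]
    (hU_unif : Measure.map U μ = volume.restrict (Set.Icc (0:ℝ) 1))
    -- Ȳ is uniformly distributed on {1,…,K}
    (hYbar_unif : ∀ y : Fin K, μ {ω | Ybar ω = y} = (K : ENNReal)⁻¹)
    -- U, Ȳ and the pair (X, Y) are mutually independent
    (hIndep : iIndep
      ![MeasurableSpace.comap U inferInstance,
        MeasurableSpace.comap Ybar inferInstance,
        MeasurableSpace.comap (fun ω => (X ω, Y ω)) inferInstance] μ)
    -- the score function, measurable with values in [0,1]
    (𝒮 : 𝒳 → Fin K → ℝ) (h𝒮 : ∀ y, Measurable fun x => 𝒮 x y)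
    (h𝒮range : ∀ x y, 𝒮 x y ∈ Set.Icc (0:ℝ) 1)
    -- the noisy label
    (Ytil : Ω → Fin K) (hYtil : ∀ ω, Ytil ω = if ε ≤ U ω then Y ω else Ybar ω)
    (α τ : ℝ) (hα : α ∈ Set.Ioo (0:ℝ) 1) :
    ∫ ω, pinball α τ (𝒮 (X ω) (Y ω)) ∂μ
      = ∫ ω, ((1 / (1 - ε)) * pinball α τ (𝒮 (X ω) (Ytil ω))
          - (ε / ((K : ℝ) * (1 - ε))) * ∑ y : Fin K, pinball α τ (𝒮 (X ω) y)) ∂μ := by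
  obtain ⟨hε0, hε1⟩ := hε
  obtain ⟨hα0, hα1⟩ := hα
  have hKpos : (0:ℝ) < (K:ℝ) := by exact_mod_cast hK
  have h1ε : (0:ℝ) < 1 - ε := by linarith
  -- measurability of the pinball loss
  have hpin : Measurable (pinball α τ) := by
    unfold pinball
    exact (((measurable_const.sub measurable_id).const_mul α).mul
        (Measurable.ite measurableSet_Iic measurable_const measurable_const)).add
      (((measurable_id.sub measurable_const).const_mul (1 - α)).mul
        (Measurable.ite measurableSet_Ioi measurable_const measurable_const))
  -- boundedness of the pinball loss on [0,1]
  have hb : ∀ s : ℝ, s ∈ Set.Icc (0:ℝ) 1 → |pinball α τ s| ≤ |τ| + 1 := by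
    intro s hs
    obtain ⟨hs0, hs1⟩ := hs
    have hτ1 : -|τ| ≤ τ := neg_abs_le τ
    have hτ2 : τ ≤ |τ| := le_abs_self τ
    unfold pinball
    rcases le_or_gt s τ with h | h
    · rw [if_pos h, if_neg (not_lt.mpr h)]
      rw [abs_le]
      constructor <;> nlinarith
    · rw [if_neg (not_le.mpr h), if_pos h]
      rw [abs_le]
      constructor <;> nlinarith
  -- integrability of bounded measurable functions
  have hint : ∀ g : Ω → ℝ, Measurable g → (∀ ω, |g ω| ≤ |τ| + 1) → Integrable g μ := by
    intro g hg hbd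
    exact (integrable_const (|τ| + 1)).mono' hg.aestronglyMeasurable
      (Filter.Eventually.of_forall fun ω => by simpa using hbd ω)
  have habs_mul : ∀ a b : ℝ, |a| ≤ 1 → |b| ≤ |τ| + 1 → |a * b| ≤ |τ| + 1 := by
    intro a b ha hbb
    rw [abs_mul]
    calc |a| * |b| ≤ 1 * (|τ| + 1) :=
        mul_le_mul ha hbb (abs_nonneg b) zero_le_one
      _ = |τ| + 1 := one_mul _
  -- measurability of the score compositions
  have hS_pair : Measurable (fun p : 𝒳 × Fin K => 𝒮 p.1 p.2) :=
    measurable_from_prod_countable_left fun y => h𝒮 y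
  have hf_meas : Measurable (fun ω => pinball α τ (𝒮 (X ω) (Y ω))) :=
    hpin.comp (hS_pair.comp (hX.prodMk hY))
  have hψ_meas : ∀ y : Fin K, Measurable (fun ω => pinball α τ (𝒮 (X ω) y)) :=
    fun y => hpin.comp ((h𝒮 y).comp hX)
  have hf_int : Integrable (fun ω => pinball α τ (𝒮 (X ω) (Y ω))) μ :=
    hint _ hf_meas fun ω => hb _ (h𝒮range _ _)
  have hψ_int : ∀ y : Fin K, Integrable (fun ω => pinball α τ (𝒮 (X ω) y)) μ :=
    fun y => hint _ (hψ_meas y) fun ω => hb _ (h𝒮range _ _)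
  -- indicator measurability
  have hφ0_meas : Measurable (fun u : ℝ => if ε ≤ u then (1:ℝ) else 0) :=
    Measurable.ite measurableSet_Ici measurable_const measurable_const
  have hφ1_meas : Measurable (fun u : ℝ => if u < ε then (1:ℝ) else 0) :=
    Measurable.ite measurableSet_Iio measurable_const measurable_const
  -- independence facts
  set m : Fin 3 → MeasurableSpace Ω :=
    ![MeasurableSpace.comap U inferInstance, MeasurableSpace.comap Ybar inferInstance,
      MeasurableSpace.comap (fun ω => (X ω, Y ω)) inferInstance] with hm
  have hm0 : m 0 = MeasurableSpace.comap U inferInstance := rfl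
  have hm1 : m 1 = MeasurableSpace.comap Ybar inferInstance := rfl
  have hm2 : m 2 = MeasurableSpace.comap (fun ω => (X ω, Y ω)) inferInstance := rfl
  have h_le : ∀ i, m i ≤ ‹MeasurableSpace Ω› := by
    intro i
    fin_cases i
    · exact hU.comap_le
    · exact hYbar.comap_le
    · exact (hX.prodMk hY).comap_le
  have hsup : Indep
      (MeasurableSpace.comap U inferInstance ⊔ MeasurableSpace.comap Ybar inferInstance)
      (MeasurableSpace.comap (fun ω => (X ω, Y ω)) inferInstance) μ := by
    have h := indep_biSup_compl h_le hIndep {0, 1}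
    have hc : (({0, 1} : Set (Fin 3))ᶜ) = {2} := by
      ext i; fin_cases i <;> simp
    rw [hc] at h
    rw [show (⨆ n ∈ ({0, 1} : Set (Fin 3)), m n) = m 0 ⊔ m 1 from iSup_pair,
      show (⨆ n ∈ ({2} : Set (Fin 3)), m n) = m 2 from iSup_singleton] at h
    exact h
  have hUY : IndepFun U Ybar μ := hIndep.indep (show (0 : Fin 3) ≠ 1 by decide)
  -- self-measurability with respect to comap σ-algebras
  have hU_self : Measurable[MeasurableSpace.comap U inferInstance] U :=
    Measurable.of_comap_le le_rfl
  have hYbar_self : Measurable[MeasurableSpace.comap Ybar inferInstance] Ybar :=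
    Measurable.of_comap_le le_rfl
  have hpair_self : Measurable[MeasurableSpace.comap (fun ω => (X ω, Y ω)) inferInstance]
      (fun ω => (X ω, Y ω)) := Measurable.of_comap_le le_rfl
  set M : MeasurableSpace Ω :=
    MeasurableSpace.comap U inferInstance ⊔ MeasurableSpace.comap Ybar inferInstance with hM
  have hUM : Measurable[M] U := hU_self.mono le_sup_left le_rfl
  have hYbarM : Measurable[M] Ybar := hYbar_self.mono le_sup_right le_rfl
  -- the comap of the pair dominates f and ψ y
  have hfM : MeasurableSpace.comap (fun ω => pinball α τ (𝒮 (X ω) (Y ω))) inferInstance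
      ≤ MeasurableSpace.comap (fun ω => (X ω, Y ω)) inferInstance :=
    Measurable.comap_le ((hpin.comp hS_pair).comp hpair_self)
  have hψM : ∀ y : Fin K,
      MeasurableSpace.comap (fun ω => pinball α τ (𝒮 (X ω) y)) inferInstance
        ≤ MeasurableSpace.comap (fun ω => (X ω, Y ω)) inferInstance :=
    fun y => Measurable.comap_le ((hpin.comp ((h𝒮 y).comp measurable_fst)).comp hpair_self)
  have hA_indep : IndepFun (fun ω => if ε ≤ U ω then (1:ℝ) else 0)
      (fun ω => pinball α τ (𝒮 (X ω) (Y ω))) μ :=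
    indep_of_indep_of_le_left (indep_of_indep_of_le_right hsup hfM)
      (Measurable.comap_le (m₁ := M) (hφ0_meas.comp hUM))
  have hB_indep : ∀ y : Fin K, IndepFun (fun ω =>
      (if U ω < ε then (1:ℝ) else 0) * (if Ybar ω = y then (1:ℝ) else 0))
      (fun ω => pinball α τ (𝒮 (X ω) y)) μ := by
    intro y
    have hφyM : Measurable[M] (fun ω =>
        (if U ω < ε then (1:ℝ) else 0) * (if Ybar ω = y then (1:ℝ) else 0)) :=
      (hφ1_meas.comp hUM).mul ((Measurable.of_discrete (f := fun z : Fin K =>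
        if z = y then (1:ℝ) else 0)).comp hYbarM)
    exact indep_of_indep_of_le_left (indep_of_indep_of_le_right hsup (hψM y))
      (Measurable.comap_le (m₁ := M) hφyM)
  clear hUM hYbarM hM hsup
  clear M
  -- measure computations
  have hμIci : μ (U ⁻¹' Set.Ici ε) = ENNReal.ofReal (1 - ε) := by
    rw [← Measure.map_apply hU measurableSet_Ici, hU_unif,
      Measure.restrict_apply measurableSet_Ici]
    have hset : Set.Ici ε ∩ Set.Icc (0:ℝ) 1 = Set.Icc ε 1 := by
      ext x
      simp only [Set.mem_inter_iff, Set.mem_Ici, Set.mem_Icc]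
      constructor
      · rintro ⟨h1, _, h3⟩; exact ⟨h1, h3⟩
      · rintro ⟨h1, h2⟩; exact ⟨h1, by linarith, h2⟩
    rw [hset, Real.volume_Icc]
  have hμIio : μ (U ⁻¹' Set.Iio ε) = ENNReal.ofReal ε := by
    rw [← Measure.map_apply hU measurableSet_Iio, hU_unif,
      Measure.restrict_apply measurableSet_Iio]
    have hset : Set.Iio ε ∩ Set.Icc (0:ℝ) 1 = Set.Ico 0 ε := by
      ext x
      simp only [Set.mem_inter_iff, Set.mem_Iio, Set.mem_Icc, Set.mem_Ico]
      constructor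
      · rintro ⟨h1, h2, _⟩; exact ⟨h2, h1⟩
      · rintro ⟨h1, h2⟩; exact ⟨h2, h1, by linarith⟩
    rw [hset, Real.volume_Ico, sub_zero]
  -- integral of the "clean" indicator times f
  have hA_int : Integrable (fun ω => (if ε ≤ U ω then (1:ℝ) else 0)
      * pinball α τ (𝒮 (X ω) (Y ω))) μ := by
    refine hint _ ((hφ0_meas.comp hU).mul hf_meas) fun ω => ?_
    refine habs_mul _ _ ?_ (hb _ (h𝒮range _ _))
    by_cases h : ε ≤ U ω <;> simp [h]
  have hφ0_int : Integrable (fun ω => if ε ≤ U ω then (1:ℝ) else 0) μ := by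
    refine hint _ (hφ0_meas.comp hU) fun ω => ?_
    have : (0:ℝ) ≤ |τ| := abs_nonneg τ
    by_cases h : ε ≤ U ω <;> simp [h] <;> linarith
  have hA : ∫ ω, (if ε ≤ U ω then (1:ℝ) else 0) * pinball α τ (𝒮 (X ω) (Y ω)) ∂μ
      = (1 - ε) * ∫ ω, pinball α τ (𝒮 (X ω) (Y ω)) ∂μ := by
    have h1 : ∫ ω, (if ε ≤ U ω then (1:ℝ) else 0) * pinball α τ (𝒮 (X ω) (Y ω)) ∂μ
        = (∫ ω, (if ε ≤ U ω then (1:ℝ) else 0) ∂μ)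
          * ∫ ω, pinball α τ (𝒮 (X ω) (Y ω)) ∂μ :=
      hA_indep.integral_fun_mul_eq_mul_integral hφ0_int.aestronglyMeasurable hf_int.aestronglyMeasurable
    have h2 : ∫ ω, (if ε ≤ U ω then (1:ℝ) else 0) ∂μ = 1 - ε := by
      have heq : (fun ω => if ε ≤ U ω then (1:ℝ) else 0)
          = (U ⁻¹' Set.Ici ε).indicator (fun _ => (1:ℝ)) := by
        funext ω
        by_cases h : ε ≤ U ω <;> simp [Set.indicator_apply, Set.mem_preimage, h]
      rw [heq, integral_indicator_const _ (hU measurableSet_Ici), measureReal_def, hμIci,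
        ENNReal.toReal_ofReal (by linarith)]
      simp
    rw [h1, h2]
  -- integral of each noisy piece
  have hB_int : ∀ y : Fin K, Integrable (fun ω =>
      ((if U ω < ε then (1:ℝ) else 0) * (if Ybar ω = y then (1:ℝ) else 0))
        * pinball α τ (𝒮 (X ω) y)) μ := by
    intro y
    refine hint _ (((hφ1_meas.comp hU).mul
      ((Measurable.of_discrete (f := fun z : Fin K =>
        if z = y then (1:ℝ) else 0)).comp hYbar)).mul (hψ_meas y)) fun ω => ?_
    refine habs_mul _ _ ?_ (hb _ (h𝒮range _ _))
    by_cases h1 : U ω < ε <;> by_cases h2 : Ybar ω = y <;> simp [h1, h2]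
  have hφy_int : ∀ y : Fin K, Integrable (fun ω =>
      (if U ω < ε then (1:ℝ) else 0) * (if Ybar ω = y then (1:ℝ) else 0)) μ := by
    intro y
    refine hint _ ((hφ1_meas.comp hU).mul ((Measurable.of_discrete (f := fun z : Fin K =>
      if z = y then (1:ℝ) else 0)).comp hYbar)) fun ω => ?_
    have : (0:ℝ) ≤ |τ| := abs_nonneg τ
    by_cases h1 : U ω < ε <;> by_cases h2 : Ybar ω = y <;> simp [h1, h2] <;> linarith
  have hB : ∀ y : Fin K, ∫ ω,
      ((if U ω < ε then (1:ℝ) else 0) * (if Ybar ω = y then (1:ℝ) else 0))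
        * pinball α τ (𝒮 (X ω) y) ∂μ
      = (ε / (K:ℝ)) * ∫ ω, pinball α τ (𝒮 (X ω) y) ∂μ := by
    intro y
    have h1 : ∫ ω, ((if U ω < ε then (1:ℝ) else 0) * (if Ybar ω = y then (1:ℝ) else 0))
          * pinball α τ (𝒮 (X ω) y) ∂μ
        = (∫ ω, (if U ω < ε then (1:ℝ) else 0) * (if Ybar ω = y then (1:ℝ) else 0) ∂μ)
          * ∫ ω, pinball α τ (𝒮 (X ω) y) ∂μ :=
      (hB_indep y).integral_fun_mul_eq_mul_integral (hφy_int y).aestronglyMeasurable (hψ_int y).aestronglyMeasurable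
    have h2 : ∫ ω, (if U ω < ε then (1:ℝ) else 0) * (if Ybar ω = y then (1:ℝ) else 0) ∂μ
        = ε / (K:ℝ) := by
      have heq : (fun ω => (if U ω < ε then (1:ℝ) else 0) * (if Ybar ω = y then (1:ℝ) else 0))
          = (U ⁻¹' Set.Iio ε ∩ Ybar ⁻¹' {y}).indicator (fun _ => (1:ℝ)) := by
        funext ω
        by_cases h1 : U ω < ε <;> by_cases h2 : Ybar ω = y <;>
          simp [Set.indicator_apply, Set.mem_preimage, h1, h2]
      have hμy : μ (U ⁻¹' Set.Iio ε ∩ Ybar ⁻¹' {y})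
          = ENNReal.ofReal ε * (K : ENNReal)⁻¹ := by
        rw [hUY.measure_inter_preimage_eq_mul _ _ measurableSet_Iio
          (measurableSet_singleton y), hμIio]
        congr 1
        have : Ybar ⁻¹' {y} = {ω | Ybar ω = y} := by
          ext ω; simp [Set.mem_preimage]
        rw [this, hYbar_unif y]
      rw [heq, integral_indicator_const _
        ((hU measurableSet_Iio).inter (hYbar (measurableSet_singleton y))), measureReal_def, hμy]
      rw [ENNReal.toReal_mul, ENNReal.toReal_ofReal hε0.le]
      simp [div_eq_mul_inv]
    rw [h1, h2]
  -- pointwise decomposition of the noisy pinball loss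
  have hpt : ∀ ω, pinball α τ (𝒮 (X ω) (Ytil ω))
      = (if ε ≤ U ω then (1:ℝ) else 0) * pinball α τ (𝒮 (X ω) (Y ω))
        + ∑ y : Fin K, ((if U ω < ε then (1:ℝ) else 0)
            * (if Ybar ω = y then (1:ℝ) else 0)) * pinball α τ (𝒮 (X ω) y) := by
    intro ω
    rw [hYtil ω]
    by_cases h : ε ≤ U ω
    · simp [h, not_lt.mpr h]
    · simp only [h, if_neg, if_false, if_pos (not_le.mp h), zero_mul, zero_add, one_mul]
      rw [Finset.sum_congr rfl (fun y _ => ite_mul (Ybar ω = y) (1:ℝ) 0 _)]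
      simp [Finset.sum_ite_eq]
  -- final assembly
  have hSumB_int : Integrable (fun ω => ∑ y : Fin K,
      ((if U ω < ε then (1:ℝ) else 0) * (if Ybar ω = y then (1:ℝ) else 0))
        * pinball α τ (𝒮 (X ω) y)) μ :=
    integrable_finset_sum _ fun y _ => hB_int y
  have hSumPsi_int : Integrable (fun ω => ∑ y : Fin K, pinball α τ (𝒮 (X ω) y)) μ :=
    integrable_finset_sum _ fun y _ => hψ_int y
  have key : ∫ ω, ((1 / (1 - ε)) * pinball α τ (𝒮 (X ω) (Ytil ω))
          - (ε / ((K : ℝ) * (1 - ε))) * ∑ y : Fin K, pinball α τ (𝒮 (X ω) y)) ∂μ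
      = (1 / (1 - ε)) * ((1 - ε) * (∫ ω, pinball α τ (𝒮 (X ω) (Y ω)) ∂μ)
            + (ε / (K:ℝ)) * ∑ y : Fin K, ∫ ω, pinball α τ (𝒮 (X ω) y) ∂μ)
        - (ε / ((K : ℝ) * (1 - ε))) * ∑ y : Fin K, ∫ ω, pinball α τ (𝒮 (X ω) y) ∂μ := by
    calc ∫ ω, ((1 / (1 - ε)) * pinball α τ (𝒮 (X ω) (Ytil ω))
            - (ε / ((K : ℝ) * (1 - ε))) * ∑ y : Fin K, pinball α τ (𝒮 (X ω) y)) ∂μ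
        = ∫ ω, ((1 / (1 - ε)) * ((if ε ≤ U ω then (1:ℝ) else 0)
              * pinball α τ (𝒮 (X ω) (Y ω))
            + ∑ y : Fin K, ((if U ω < ε then (1:ℝ) else 0)
                * (if Ybar ω = y then (1:ℝ) else 0)) * pinball α τ (𝒮 (X ω) y))
            - (ε / ((K : ℝ) * (1 - ε))) * ∑ y : Fin K, pinball α τ (𝒮 (X ω) y)) ∂μ := by
          simp only [hpt]
      _ = (1 / (1 - ε)) * (∫ ω, ((if ε ≤ U ω then (1:ℝ) else 0)
              * pinball α τ (𝒮 (X ω) (Y ω))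
            + ∑ y : Fin K, ((if U ω < ε then (1:ℝ) else 0)
                * (if Ybar ω = y then (1:ℝ) else 0)) * pinball α τ (𝒮 (X ω) y)) ∂μ)
          - (ε / ((K : ℝ) * (1 - ε)))
            * ∫ ω, ∑ y : Fin K, pinball α τ (𝒮 (X ω) y) ∂μ := by
          have hg1 : Integrable (fun ω => (1 / (1 - ε)) * ((if ε ≤ U ω then (1:ℝ) else 0)
                * pinball α τ (𝒮 (X ω) (Y ω))
              + ∑ y : Fin K, ((if U ω < ε then (1:ℝ) else 0)
                  * (if Ybar ω = y then (1:ℝ) else 0)) * pinball α τ (𝒮 (X ω) y))) μ := by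
            exact (hA_int.add hSumB_int).const_mul _
          have hg2 : Integrable (fun ω => (ε / ((K : ℝ) * (1 - ε)))
              * ∑ y : Fin K, pinball α τ (𝒮 (X ω) y)) μ := by
            exact hSumPsi_int.const_mul _
          rw [integral_sub hg1 hg2, integral_const_mul, integral_const_mul]
      _ = (1 / (1 - ε)) * ((1 - ε) * (∫ ω, pinball α τ (𝒮 (X ω) (Y ω)) ∂μ)
            + (ε / (K:ℝ)) * ∑ y : Fin K, ∫ ω, pinball α τ (𝒮 (X ω) y) ∂μ)
          - (ε / ((K : ℝ) * (1 - ε)))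
            * ∑ y : Fin K, ∫ ω, pinball α τ (𝒮 (X ω) y) ∂μ := by
          rw [integral_add hA_int hSumB_int, integral_finset_sum _ (fun y _ => hB_int y),
            integral_finset_sum _ (fun y _ => hψ_int y), hA,
            Finset.sum_congr rfl (fun y _ => hB y), ← Finset.mul_sum]
  rw [key]
  have hK0 : (K:ℝ) ≠ 0 := ne_of_gt hKpos
  have h1ε0 : (1:ℝ) - ε ≠ 0 := ne_of_gt h1ε
  field_simp
  ring
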